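/- arXiv:2106.09322 — 4 statements merged into one kernel-verified Lean document; each statement's English description precedes it below -/
import Mathlib

section
/- For all real x > 0 and fixed x̃ > 0, the inequality √(2x/(1+x)) ≤ ρ(x̃)·ln(1+x) + η(x̃) holds, where ρ(x̃) = 1/√(2x̃(1+x̃)) and η(x̃) = √(2x̃/(1+x̃)) − ρ(x̃)·ln(1+x̃), with equality when x = x̃. -/
open Real

lemma key_ineq (a b : ℝ) (ha : 0 < a) (hb : 0 < b) (ha2 : a^2 < 2) (hb2 : b^2 < 2) :
    a - b ≤ (2 - b^2)/(2*b) * Real.log ((2 - b^2)/(2 - a^2)) := by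
  have h1 : (0:ℝ) < 2 - a^2 := by linarith
  have h2 : (0:ℝ) < 2 - b^2 := by linarith
  have hr : (0:ℝ) < (2 - a^2)/(2 - b^2) := by positivity
  have hlog := Real.log_le_sub_one_of_pos hr
  have hlog2 : Real.log ((2 - b^2)/(2 - a^2)) = - Real.log ((2 - a^2)/(2 - b^2)) := by
    rw [← Real.log_inv]
    congr 1
    field_simp
  rw [hlog2]
  have hle : 1 - (2 - a^2)/(2 - b^2) ≤ - Real.log ((2 - a^2)/(2 - b^2)) := by linarith
  have hmul : (2 - b^2)/(2*b) * (1 - (2 - a^2)/(2 - b^2)) ≤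
      (2 - b^2)/(2*b) * (- Real.log ((2 - a^2)/(2 - b^2))) :=
    mul_le_mul_of_nonneg_left hle (by positivity)
  have heq : (2 - b^2)/(2*b) * (1 - (2 - a^2)/(2 - b^2)) = (a^2 - b^2)/(2*b) := by
    field_simp
    ring
  have hstep : a - b ≤ (a^2 - b^2)/(2*b) := by
    rw [le_div_iff₀ (by positivity)]
    nlinarith [sq_nonneg (a - b)]
  linarith [heq ▸ hmul]

theorem tangent_log_upper_bound (xt : ℝ) (hxt : 0 < xt) :
    (∀ x : ℝ, 0 < x →
      Real.sqrt (2 * x / (1 + x)) ≤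
        (1 / Real.sqrt (2 * xt * (1 + xt))) * Real.log (1 + x) +
          (Real.sqrt (2 * xt / (1 + xt)) -
            (1 / Real.sqrt (2 * xt * (1 + xt))) * Real.log (1 + xt))) ∧
    Real.sqrt (2 * xt / (1 + xt)) =
      (1 / Real.sqrt (2 * xt * (1 + xt))) * Real.log (1 + xt) +
        (Real.sqrt (2 * xt / (1 + xt)) -
          (1 / Real.sqrt (2 * xt * (1 + xt))) * Real.log (1 + xt)) := by
  constructor
  · intro x hx
    have hxt1 : (0:ℝ) < 1 + xt := by linarith
    have hx1 : (0:ℝ) < 1 + x := by linarith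
    set a := Real.sqrt (2 * x / (1 + x)) with hadef
    set b := Real.sqrt (2 * xt / (1 + xt)) with hbdef
    set s := Real.sqrt (2 * xt * (1 + xt)) with hsdef
    have ha2 : a^2 = 2 * x / (1 + x) := Real.sq_sqrt (by positivity)
    have hb2 : b^2 = 2 * xt / (1 + xt) := Real.sq_sqrt (by positivity)
    have hs2 : s^2 = 2 * xt * (1 + xt) := Real.sq_sqrt (by positivity)
    have ha : 0 < a := Real.sqrt_pos.mpr (by positivity)
    have hb : 0 < b := Real.sqrt_pos.mpr (by positivity)
    have hs : 0 < s := Real.sqrt_pos.mpr (by positivity)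
    have ha2lt : a^2 < 2 := by
      rw [ha2, div_lt_iff₀ hx1]; linarith
    have hb2lt : b^2 < 2 := by
      rw [hb2, div_lt_iff₀ hxt1]; linarith
    -- b * s = 2 * xt
    have hbs : b * s = 2 * xt := by
      rw [hbdef, hsdef, ← Real.sqrt_mul (by positivity)]
      rw [show 2 * xt / (1 + xt) * (2 * xt * (1 + xt)) = (2*xt)^2 by
        field_simp]
      exact Real.sqrt_sq (by positivity)
    -- 1/s = (2 - b^2)/(2*b)
    have hrho : 1 / s = (2 - b^2)/(2*b) := by
      rw [div_eq_div_iff hs.ne' (by positivity)]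
      nlinarith [hbs, hb2]
    -- log arg identity
    have hlogarg : (2 - b^2)/(2 - a^2) = (1 + x)/(1 + xt) := by
      rw [ha2, hb2]
      have h1 : 2 - 2 * x / (1 + x) = 2 / (1 + x) := by field_simp; ring
      have h2 : 2 - 2 * xt / (1 + xt) = 2 / (1 + xt) := by field_simp; ring
      rw [h1, h2]
      field_simp
    have hkey := key_ineq a b ha hb ha2lt hb2lt
    rw [hlogarg, Real.log_div (by positivity) (by positivity)] at hkey
    rw [← hrho] at hkey
    linarith [hkey]
  · ring
end

section
/- Fix x̃ > 0 and let F(x) = ρ(x̃)·ln(1+x) + η(x̃) − √(2x/(1+x)) with ρ(x̃) = 1/√(2x̃(1+x̃)) and η(x̃) = √(2x̃/(1+x̃)) − ρ(x̃)·ln(1+x̃). Then F is strictly decreasing on (0, x̃) and strictly increasing on (x̃, ∞), so x̃ is the unique global minimizer of F on (0,∞) with F(x̃) = 0. -/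
open Real Set

private lemma sqrt_frac_eq (x : ℝ) (hx : 0 < x) :
    Real.sqrt (2 * x / (1 + x)) = Real.sqrt (2 * x * (1 + x)) / (1 + x) := by
  have h1 : (0:ℝ) < 1 + x := by linarith
  rw [show 2 * x / (1 + x) = 2 * x * (1 + x) / (1 + x) ^ 2 by field_simp,
    Real.sqrt_div (by positivity), Real.sqrt_sq h1.le]

private lemma hasDerivAt_g (x : ℝ) (hx : 0 < x) :
    HasDerivAt (fun y => Real.sqrt (2 * y / (1 + y)))
      (1 / (Real.sqrt (2 * x * (1 + x)) * (1 + x))) x := by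
  have h1 : (0:ℝ) < 1 + x := by linarith
  have hu : HasDerivAt (fun y : ℝ => 2 * y / (1 + y))
      ((2 * 1 * (1 + x) - 2 * x * (0 + 1)) / (1 + x) ^ 2) x :=
    ((hasDerivAt_id x).const_mul 2).div ((hasDerivAt_const x 1).add (hasDerivAt_id x)) h1.ne'
  have hne : 2 * x / (1 + x) ≠ 0 := by positivity
  have := (Real.hasDerivAt_sqrt hne).comp x hu
  refine this.congr_deriv ?_
  rw [sqrt_frac_eq x hx]
  have hs : 0 < Real.sqrt (2 * x * (1 + x)) := Real.sqrt_pos.2 (by positivity)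
  field_simp
  ring

theorem F_min_at_tangent_point (xt : ℝ) (hxt : 0 < xt) :
    let ρ : ℝ := 1 / Real.sqrt (2 * xt * (1 + xt))
    let η : ℝ := Real.sqrt (2 * xt / (1 + xt)) - ρ * Real.log (1 + xt)
    let F : ℝ → ℝ := fun x => ρ * Real.log (1 + x) + η - Real.sqrt (2 * x / (1 + x))
    StrictAntiOn F (Set.Ioo 0 xt) ∧
    StrictMonoOn F (Set.Ioi xt) ∧
    F xt = 0 ∧
    ∀ x ∈ Set.Ioi (0 : ℝ), x ≠ xt → F xt < F x := by
  intro ρ η F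
  have hst : 0 < Real.sqrt (2 * xt * (1 + xt)) := Real.sqrt_pos.2 (by positivity)
  have hderiv : ∀ x ∈ Ioi (0:ℝ), HasDerivAt F
      ((1 / Real.sqrt (2 * xt * (1 + xt)) - 1 / Real.sqrt (2 * x * (1 + x))) / (1 + x)) x := by
    intro x hx
    have hx0 : (0:ℝ) < x := hx
    have h1 : (0:ℝ) < 1 + x := by linarith
    have hlog : HasDerivAt (fun y : ℝ => Real.log (1 + y)) ((0 + 1) / (1 + x)) x :=
      ((hasDerivAt_const x 1).add (hasDerivAt_id x)).log h1.ne'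
    have hsx : 0 < Real.sqrt (2 * x * (1 + x)) := Real.sqrt_pos.2 (by positivity)
    have := ((hlog.const_mul ρ).add_const η).sub (hasDerivAt_g x hx0)
    refine this.congr_deriv ?_
    show ρ * ((0 + 1) / (1 + x)) - 1 / (Real.sqrt (2 * x * (1 + x)) * (1 + x)) = _
    simp only [ρ]
    field_simp
    ring
  have hcont : ContinuousOn F (Ioi 0) := fun x hx =>
    ((hderiv x hx).continuousAt).continuousWithinAt
  have hderivval : ∀ x ∈ Ioi (0:ℝ), deriv F x =
      (1 / Real.sqrt (2 * xt * (1 + xt)) - 1 / Real.sqrt (2 * x * (1 + x))) / (1 + x) :=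
    fun x hx => (hderiv x hx).deriv
  have hanti : StrictAntiOn F (Ioc 0 xt) := by
    apply strictAntiOn_of_deriv_neg (convex_Ioc 0 xt)
      (hcont.mono (fun y hy => hy.1))
    intro x hx
    rw [interior_Ioc] at hx
    have hx0 : (0:ℝ) < x := hx.1
    have h1 : (0:ℝ) < 1 + x := by linarith
    rw [hderivval x hx0]
    have hsx : 0 < Real.sqrt (2 * x * (1 + x)) := Real.sqrt_pos.2 (by positivity)
    have hlt : Real.sqrt (2 * x * (1 + x)) < Real.sqrt (2 * xt * (1 + xt)) := by
      apply Real.sqrt_lt_sqrt (by positivity)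
      nlinarith [hx.2]
    have : 1 / Real.sqrt (2 * xt * (1 + xt)) < 1 / Real.sqrt (2 * x * (1 + x)) :=
      one_div_lt_one_div_of_lt hsx hlt
    apply div_neg_of_neg_of_pos (by linarith) h1
  have hmono : StrictMonoOn F (Ici xt) := by
    apply strictMonoOn_of_deriv_pos (convex_Ici xt)
      (hcont.mono (fun y hy => lt_of_lt_of_le hxt hy))
    intro x hx
    rw [interior_Ici] at hx
    have hx' : xt < x := hx
    have hx0 : (0:ℝ) < x := lt_trans hxt hx'
    have h1 : (0:ℝ) < 1 + x := by linarith
    rw [hderivval x hx0]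
    have hsx : 0 < Real.sqrt (2 * x * (1 + x)) := Real.sqrt_pos.2 (by positivity)
    have hlt : Real.sqrt (2 * xt * (1 + xt)) < Real.sqrt (2 * x * (1 + x)) := by
      apply Real.sqrt_lt_sqrt (by positivity)
      nlinarith
    have : 1 / Real.sqrt (2 * x * (1 + x)) < 1 / Real.sqrt (2 * xt * (1 + xt)) :=
      one_div_lt_one_div_of_lt hst hlt
    apply div_pos (by linarith) h1
  have hFxt : F xt = 0 := by
    show ρ * Real.log (1 + xt) +
      (Real.sqrt (2 * xt / (1 + xt)) - ρ * Real.log (1 + xt)) -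
      Real.sqrt (2 * xt / (1 + xt)) = 0
    ring
  refine ⟨hanti.mono (fun y hy => ⟨hy.1, hy.2.le⟩), hmono.mono (fun y hy => show xt ≤ y from le_of_lt hy),
    hFxt, ?_⟩
  intro x hx hne
  rcases lt_or_gt_of_ne hne with h | h
  · exact hanti ⟨hx, h.le⟩ ⟨hxt, le_refl xt⟩ h
  · exact hmono (le_refl xt) h.le h
end

section
/- For positive reals γ_1,…,γ_T and any positive γ̃_1,…,γ̃_T, √(∑_{t=1}^T 2γ_t/(1+γ_t)) ≤ ∑_{t=1}^T [ρ(γ̃_t)·ln(1+γ_t) + η(γ̃_t)], where ρ(y) = 1/√(2y(1+y)) and η(y) = √(2y/(1+y)) − ρ(y)·ln(1+y). -/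
open Real

lemma sqrt_add_le' (a b : ℝ) (ha : 0 ≤ a) (hb : 0 ≤ b) :
    Real.sqrt (a + b) ≤ Real.sqrt a + Real.sqrt b := by
  rw [show a + b = Real.sqrt a ^ 2 + Real.sqrt b ^ 2 by
    rw [Real.sq_sqrt ha, Real.sq_sqrt hb]]
  calc Real.sqrt (Real.sqrt a ^ 2 + Real.sqrt b ^ 2)
      ≤ Real.sqrt ((Real.sqrt a + Real.sqrt b) ^ 2) := by
        apply Real.sqrt_le_sqrt
        have := mul_nonneg (Real.sqrt_nonneg a) (Real.sqrt_nonneg b)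
        nlinarith
    _ = Real.sqrt a + Real.sqrt b := Real.sqrt_sq (by positivity)

lemma sqrt_sum_le (T : ℕ) (f : Fin T → ℝ) (hf : ∀ t, 0 ≤ f t) :
    Real.sqrt (∑ t, f t) ≤ ∑ t, Real.sqrt (f t) := by
  induction T with
  | zero => simp
  | succ n ih =>
      rw [Fin.sum_univ_succ, Fin.sum_univ_succ]
      calc Real.sqrt (f 0 + ∑ i : Fin n, f i.succ)
          ≤ Real.sqrt (f 0) + Real.sqrt (∑ i : Fin n, f i.succ) :=
            sqrt_add_le' _ _ (hf 0) (Finset.sum_nonneg fun i _ => hf i.succ)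
        _ ≤ Real.sqrt (f 0) + ∑ i : Fin n, Real.sqrt (f i.succ) := by
            gcongr
            exact ih (fun i => f i.succ) (fun i => hf i.succ)

lemma per_term (x y : ℝ) (hx : 0 < x) (hy : 0 < y) :
    Real.sqrt (2 * x / (1 + x)) ≤
      (1 / Real.sqrt (2 * y * (1 + y))) * Real.log (1 + x) +
        (Real.sqrt (2 * y / (1 + y)) -
          (1 / Real.sqrt (2 * y * (1 + y))) * Real.log (1 + y)) := by
  have h1x : (0:ℝ) < 1 + x := by linarith
  have h1y : (0:ℝ) < 1 + y := by linarith
  set A := 2 * x / (1 + x) with hA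
  set B := 2 * y / (1 + y) with hB
  have hApos : 0 < A := by positivity
  have hBpos : 0 < B := by positivity
  have hsB : 0 < Real.sqrt B := Real.sqrt_pos.mpr hBpos
  have hρpos : 0 < Real.sqrt (2 * y * (1 + y)) := by positivity
  -- step 1: √A ≤ √B + (A - B)/(2√B)
  have step1 : Real.sqrt A ≤ Real.sqrt B + (A - B) / (2 * Real.sqrt B) := by
    rw [← sub_le_iff_le_add', le_div_iff₀ (by positivity)]
    nlinarith [Real.sq_sqrt hApos.le, Real.sq_sqrt hBpos.le,
      sq_nonneg (Real.sqrt A - Real.sqrt B), hsB, Real.sqrt_nonneg A]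
  -- identity: (A - B)/(2√B) = (x - y)/((1+x) * √(2y(1+y)))
  have hBsqrt : Real.sqrt B = Real.sqrt (2 * y * (1 + y)) / (1 + y) := by
    rw [hB, show 2 * y / (1 + y) = 2 * y * (1 + y) / (1 + y) ^ 2 by
      field_simp, Real.sqrt_div (by positivity), Real.sqrt_sq h1y.le]
  have key : (A - B) / (2 * Real.sqrt B)
      = (x - y) / ((1 + x) * Real.sqrt (2 * y * (1 + y))) := by
    rw [hA, hB, hBsqrt]
    have h2 := Real.sq_sqrt (show (0:ℝ) ≤ 2 * y * (1 + y) by positivity)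
    field_simp
    nlinarith [hρpos]
  -- step 2: (x-y)/((1+x)√(2y(1+y))) ≤ ρ (ln(1+x) - ln(1+y))
  have hlog : (x - y) / (1 + x) ≤ Real.log (1 + x) - Real.log (1 + y) := by
    have hz : (0:ℝ) < (1 + y) / (1 + x) := by positivity
    have h := Real.log_le_sub_one_of_pos hz
    rw [Real.log_div (by positivity) (by positivity)] at h
    have he : (x - y) / (1 + x) = 1 - (1 + y) / (1 + x) := by field_simp; ring
    rw [he]; linarith
  have step2 : (x - y) / ((1 + x) * Real.sqrt (2 * y * (1 + y)))
      ≤ (1 / Real.sqrt (2 * y * (1 + y))) * (Real.log (1 + x) - Real.log (1 + y)) := by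
    rw [div_mul_eq_div_div, one_div, inv_mul_eq_div, div_le_div_iff_of_pos_right hρpos]
    exact hlog
  calc Real.sqrt A ≤ Real.sqrt B + (A - B) / (2 * Real.sqrt B) := step1
    _ = Real.sqrt B + (x - y) / ((1 + x) * Real.sqrt (2 * y * (1 + y))) := by rw [key]
    _ ≤ Real.sqrt B + (1 / Real.sqrt (2 * y * (1 + y))) *
          (Real.log (1 + x) - Real.log (1 + y)) := by linarith [step2]
    _ = _ := by ring

theorem sqrt_sum_dispersion_bound (T : ℕ) (γ γt : Fin T → ℝ)
    (hγ : ∀ t, 0 < γ t) (hγt : ∀ t, 0 < γt t) :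
    Real.sqrt (∑ t, 2 * γ t / (1 + γ t)) ≤
      ∑ t, ((1 / Real.sqrt (2 * γt t * (1 + γt t))) * Real.log (1 + γ t) +
        (Real.sqrt (2 * γt t / (1 + γt t)) -
          (1 / Real.sqrt (2 * γt t * (1 + γt t))) * Real.log (1 + γt t))) := by
  calc Real.sqrt (∑ t, 2 * γ t / (1 + γ t))
      ≤ ∑ t, Real.sqrt (2 * γ t / (1 + γ t)) := by
        apply sqrt_sum_le
        intro t
        have := hγ t
        positivity
    _ ≤ _ := Finset.sum_le_sum fun t _ => per_term _ _ (hγ t) (hγt t)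
end

section
/- For γ > 0, m > 0, and 0 < ε < 1/2 (so that Q⁻¹(ε) > 0), the finite-blocklength rate R(γ) = log₂(1+γ) − √(V(γ)/m)·Q⁻¹(ε) with V(γ) = (2γ/(1+γ))(log₂ e)² satisfies R(γ) ≥ (1 − Q⁻¹(ε)ρ(γ̃)/√m)·log₂(1+γ) − (Q⁻¹(ε)η(γ̃)/√m)·log₂ e for any γ̃ > 0, where ρ and η are as in Lemma 1. -/
open Real

noncomputable def gaussianQ (x : ℝ) : ℝ :=
  ∫ u in Set.Ioi x, (1 / Real.sqrt (2 * Real.pi)) * Real.exp (-u ^ 2 / 2)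

lemma sqrt_tangent_bound (γ γt : ℝ) (hγ : 0 < γ) (hγt : 0 < γt) :
    Real.sqrt (2 * γ / (1 + γ)) ≤ Real.sqrt (2 * γt / (1 + γt)) +
      (1 / Real.sqrt (2 * γt * (1 + γt))) * (Real.log (1 + γ) - Real.log (1 + γt)) := by
  set a := Real.sqrt (2 * γ / (1 + γ)) with ha
  set b := Real.sqrt (2 * γt / (1 + γt)) with hb
  set s := Real.sqrt (2 * γt * (1 + γt)) with hs
  have h1γ : (0:ℝ) < 1 + γ := by linarith
  have h1γt : (0:ℝ) < 1 + γt := by linarith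
  have ha0 : 0 ≤ a := Real.sqrt_nonneg _
  have hs0 : 0 < s := Real.sqrt_pos.mpr (by positivity)
  have ha2 : a ^ 2 = 2 * γ / (1 + γ) := Real.sq_sqrt (by positivity)
  have hs2 : s ^ 2 = 2 * γt * (1 + γt) := Real.sq_sqrt (by positivity)
  have hbs : b * s = 2 * γt := by
    rw [hb, hs, ← Real.sqrt_mul (by positivity)]
    have : 2 * γt / (1 + γt) * (2 * γt * (1 + γt)) = (2 * γt) ^ 2 := by
      field_simp
    rw [this, Real.sqrt_sq (by positivity)]
  have hlog : (γ - γt) / (1 + γ) ≤ Real.log (1 + γ) - Real.log (1 + γt) := by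
    have h := Real.log_le_sub_one_of_pos (show 0 < (1 + γt) / (1 + γ) by positivity)
    rw [Real.log_div (by positivity) (by positivity)] at h
    have h2 : (1 + γt) / (1 + γ) - 1 = (γt - γ) / (1 + γ) := by field_simp; ring
    have h3 : (γ - γt) / (1 + γ) = -((γt - γ) / (1 + γ)) := by ring
    linarith
  have hmain : a * (s * (1 + γ)) ≤ γ + γt + 2 * γ * γt := by
    have hL0 : 0 ≤ a * (s * (1 + γ)) := by positivity
    have hR0 : 0 ≤ γ + γt + 2 * γ * γt := by positivity
    have hsq : (a * (s * (1 + γ))) ^ 2 ≤ (γ + γt + 2 * γ * γt) ^ 2 := by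
      have e1 : (a * (s * (1 + γ))) ^ 2 = a ^ 2 * s ^ 2 * (1 + γ) ^ 2 := by ring
      rw [e1, ha2, hs2]
      have e2 : 2 * γ / (1 + γ) * (2 * γt * (1 + γt)) * (1 + γ) ^ 2
          = 4 * γ * γt * (1 + γt) * (1 + γ) := by field_simp; ring
      rw [e2]
      nlinarith [sq_nonneg (γ - γt)]
    have := Real.sqrt_le_sqrt hsq
    rwa [Real.sqrt_sq hL0, Real.sqrt_sq hR0] at this
  have hfinal : a ≤ b + (γ - γt) / (s * (1 + γ)) := by
    have hpos : 0 < s * (1 + γ) := by positivity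
    rw [← sub_le_iff_le_add', le_div_iff₀ hpos]
    nlinarith [hmain, hbs]
  have hmul : (1 / s) * ((γ - γt) / (1 + γ)) ≤
      (1 / s) * (Real.log (1 + γ) - Real.log (1 + γt)) :=
    mul_le_mul_of_nonneg_left hlog (by positivity)
  have heq : (1 / s) * ((γ - γt) / (1 + γ)) = (γ - γt) / (s * (1 + γ)) := by
    field_simp
  linarith [hfinal, hmul, heq ▸ hmul]

lemma gaussianQ_q_nonneg (ε q : ℝ) (hε' : ε < 1 / 2) (hq : gaussianQ q = ε) : 0 ≤ q := by
  by_contra h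
  push_neg at h
  have hconst : ∀ u : ℝ, -u ^ 2 / 2 = -(1/2 * u ^ 2) := fun u => by ring
  have hI : MeasureTheory.Integrable (fun u : ℝ =>
      (1 / Real.sqrt (2 * Real.pi)) * Real.exp (-u ^ 2 / 2)) := by
    have := (integrable_exp_neg_mul_sq (show (0:ℝ) < 1/2 by norm_num)).const_mul
      (1 / Real.sqrt (2 * Real.pi))
    simpa [hconst, neg_mul] using this
  have hnn : ∀ u : ℝ, 0 ≤ (1 / Real.sqrt (2 * Real.pi)) * Real.exp (-u ^ 2 / 2) := by
    intro u; positivity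
  have hzero : gaussianQ 0 = 1 / 2 := by
    unfold gaussianQ
    rw [MeasureTheory.integral_const_mul]
    have : ∫ u in Set.Ioi (0:ℝ), Real.exp (-u ^ 2 / 2)
        = ∫ u in Set.Ioi (0:ℝ), Real.exp (-(1/2) * u ^ 2) := by
      congr 1; ext u; rw [hconst u]; ring_nf
    rw [this, integral_gaussian_Ioi]
    have hπ : (0:ℝ) < Real.sqrt (2 * Real.pi) := Real.sqrt_pos.mpr (by positivity)
    have : Real.sqrt (Real.pi / (1/2)) = Real.sqrt (2 * Real.pi) := by
      congr 1; field_simp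
    rw [this]
    field_simp
  have hmono : gaussianQ 0 ≤ gaussianQ q := by
    unfold gaussianQ
    apply MeasureTheory.setIntegral_mono_set hI.integrableOn
    · exact Filter.Eventually.of_forall (fun u => hnn u)
    · exact Filter.Eventually.of_forall (Set.Ioi_subset_Ioi h.le)
  rw [hzero, hq] at hmono
  linarith

theorem finite_blocklength_rate_lower_bound
    (γ m ε q : ℝ) (hγ : 0 < γ) (hm : 0 < m) (hε : 0 < ε) (hε' : ε < 1 / 2)
    (hq : gaussianQ q = ε) (γt : ℝ) (hγt : 0 < γt) :
    let ρ : ℝ := 1 / Real.sqrt (2 * γt * (1 + γt))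
    let η : ℝ := Real.sqrt (2 * γt / (1 + γt)) - ρ * Real.log (1 + γt)
    let V : ℝ := (2 * γ / (1 + γ)) * (Real.logb 2 (Real.exp 1)) ^ 2
    Real.logb 2 (1 + γ) - Real.sqrt (V / m) * q ≥
      (1 - q * ρ / Real.sqrt m) * Real.logb 2 (1 + γ) -
        (q * η / Real.sqrt m) * Real.logb 2 (Real.exp 1) := by
  intro ρ η V
  have hρ : ρ = 1 / Real.sqrt (2 * γt * (1 + γt)) := rfl
  have hη : η = Real.sqrt (2 * γt / (1 + γt)) - ρ * Real.log (1 + γt) := rfl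
  have hVdef : V = (2 * γ / (1 + γ)) * (Real.logb 2 (Real.exp 1)) ^ 2 := rfl
  clear_value ρ η V
  have hq0 : 0 ≤ q := gaussianQ_q_nonneg ε q hε' hq
  have h1γ : (0:ℝ) < 1 + γ := by linarith
  have hsm : 0 < Real.sqrt m := Real.sqrt_pos.mpr hm
  have hL2 : Real.logb 2 (Real.exp 1) = 1 / Real.log 2 := by
    rw [Real.logb, Real.log_exp]
  have hlog2 : 0 < Real.log 2 := Real.log_pos (by norm_num)
  have hL2pos : 0 < Real.logb 2 (Real.exp 1) := by rw [hL2]; positivity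
  have hlogb : Real.logb 2 (1 + γ) = Real.log (1 + γ) * Real.logb 2 (Real.exp 1) := by
    rw [hL2, Real.logb]; ring
  have hV : Real.sqrt (V / m) =
      Real.sqrt (2 * γ / (1 + γ)) * Real.logb 2 (Real.exp 1) / Real.sqrt m := by
    rw [hVdef,
      Real.sqrt_div (by positivity), Real.sqrt_mul (by positivity),
      Real.sqrt_sq hL2pos.le]
  have hkey := sqrt_tangent_bound γ γt hγ hγt
  have hkey2 : Real.sqrt (2 * γ / (1 + γ)) ≤ ρ * Real.log (1 + γ) + η := by
    rw [hη, hρ]; linarith [hkey]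
  have hc : (0:ℝ) ≤ q * Real.logb 2 (Real.exp 1) := by positivity
  have hprod := mul_le_mul_of_nonneg_left hkey2 hc
  rw [hV, hlogb, ge_iff_le, ← sub_nonneg]
  have he : Real.log (1 + γ) * Real.logb 2 (Real.exp 1) -
      Real.sqrt (2 * γ / (1 + γ)) * Real.logb 2 (Real.exp 1) / Real.sqrt m * q -
      ((1 - q * ρ / Real.sqrt m) * (Real.log (1 + γ) * Real.logb 2 (Real.exp 1)) -
        q * η / Real.sqrt m * Real.logb 2 (Real.exp 1)) =
      (q * Real.logb 2 (Real.exp 1) * (ρ * Real.log (1 + γ) + η) -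
        q * Real.logb 2 (Real.exp 1) * Real.sqrt (2 * γ / (1 + γ))) / Real.sqrt m := by
    field_simp
    ring
  rw [he]
  exact div_nonneg (by linarith [hprod]) hsm.le
end
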